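/- Let F = ℝ or ℂ, let A_j = (E_{n_j}; x E_{n_j} + J_{n_j}) for j = 1, …, ℓ with n_j ≥ 2, and let X be an arbitrary n'×n' matrix. Then the tensor rank over F of the block diagonal tensor Diag(A_1, …, A_ℓ, (E_{n'}; X)) is at least Σ_{j=1}^ℓ n_j + n' + ℓ. -/

import Mathlib

set_option maxRecDepth 20000

open Matrix BigOperators

/-- A pair of matrices `(A; B)` admits a simultaneous decomposition into `r`
rank-one tensors. -/
def pairDecomp {F : Type*} [Field F] {m n : Type*} [Fintype m] [Fintype n] (r : ℕ)
    (A B : Matrix m n F) : Prop :=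
  ∃ (a : Fin r → m → F) (b : Fin r → n → F) (α β : Fin r → F),
    A = ∑ i, α i • Matrix.vecMulVec (a i) (b i) ∧
    B = ∑ i, β i • Matrix.vecMulVec (a i) (b i)

/-- The tensor rank of the pair of matrices `(A; B)`. -/
noncomputable def pairRank {F : Type*} [Field F] {m n : Type*} [Fintype m] [Fintype n]
    (A B : Matrix m n F) : ℕ :=
  sInf {r | pairDecomp r A B}

/-- The pair `(A; B)` of rectangular matrices is diagonalizable. -/
def pairDiag {F : Type*} [Field F] {m n : ℕ} (A B : Matrix (Fin m) (Fin n) F) : Prop :=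
  ∃ (P : (Matrix (Fin m) (Fin m) F)ˣ) (Q : (Matrix (Fin n) (Fin n) F)ˣ),
    (∀ (i : Fin m) (j : Fin n), (i : ℕ) ≠ (j : ℕ) → ((P : Matrix (Fin m) (Fin m) F) * A * (Q : Matrix (Fin n) (Fin n) F)) i j = 0) ∧
    (∀ (i : Fin m) (j : Fin n), (i : ℕ) ≠ (j : ℕ) → ((P : Matrix (Fin m) (Fin m) F) * B * (Q : Matrix (Fin n) (Fin n) F)) i j = 0)

/-- The nilpotent Jordan block of size `k`. -/
def jordanNil {F : Type*} [Field F] (k : ℕ) : Matrix (Fin k) (Fin k) F :=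
  Matrix.of fun i j => if (i : ℕ) + 1 = (j : ℕ) then 1 else 0

open Module LinearMap

/-- Key abstract lemma: if `D` is an endomorphism with `ker D ⊓ range D = ⊥`
(e.g. a diagonal matrix), `P`, `S` with `P ∘ S = id`, then the "compression"
`P ∘ D ∘ S` has at most `dim (ker P)` nontrivial Jordan blocks at eigenvalue `0`,
measured as `dim (ker ⊓ range)`. -/
lemma lemA {F U V : Type*} [Field F] [AddCommGroup U] [Module F U]
    [AddCommGroup V] [Module F V] [FiniteDimensional F U] [FiniteDimensional F V]
    (P : U →ₗ[F] V) (S : V →ₗ[F] U) (D : U →ₗ[F] U)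
    (hPS : ∀ v, P (S v) = v) (hD : ker D ⊓ range D = ⊥) :
    finrank F ↥(ker (P ∘ₗ D ∘ₗ S) ⊓ range (P ∘ₗ D ∘ₗ S)) ≤ finrank F ↥(ker P) := by
  set C : V →ₗ[F] V := P ∘ₗ D ∘ₗ S with hC
  set K : Submodule F V := ker C ⊓ range C with hK
  set φ : ↥K →ₗ[F] U := (D ∘ₗ S) ∘ₗ K.subtype with hφ
  obtain ⟨σ, hσ⟩ := C.rangeRestrict.exists_rightInverse_of_surjective
    (LinearMap.range_rangeRestrict C ▸ rfl)
  have hσ' : ∀ y : ↥(range C), C (σ y) = (y : V) := by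
    intro y
    have := congrArg (fun f => (f y : V)) hσ
    simpa using this
  set incl : ↥K →ₗ[F] ↥(range C) := Submodule.inclusion inf_le_right with hincl
  set ψ₀ : ↥K →ₗ[F] U := (D ∘ₗ S) ∘ₗ σ ∘ₗ incl - S ∘ₗ K.subtype with hψ₀
  have hψ₀mem : ∀ xK : ↥K, ψ₀ xK ∈ ker P := by
    intro xK
    have h1 : P (D (S (σ (incl xK)))) = (xK : V) := by
      have := hσ' (incl xK)
      simp [hC] at this
      exact this
    simp only [hψ₀, LinearMap.mem_ker, map_sub, LinearMap.sub_apply, LinearMap.comp_apply]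
    rw [h1, hPS]
    simp
  set T : Submodule F U := range φ with hT
  have hTW : T ≤ ker P := by
    rintro _ ⟨xK, rfl⟩
    have hx : (xK : V) ∈ ker C := xK.2.1
    simpa [hφ, hC, LinearMap.mem_ker] using hx
  set T' : Submodule F ↥(ker P) := T.comap (ker P).subtype with hT'
  set ψ : ↥(ker φ) →ₗ[F] (↥(ker P) ⧸ T') :=
    T'.mkQ ∘ₗ ((ψ₀ ∘ₗ (ker φ).subtype).codRestrict (ker P) (fun c => hψ₀mem _)) with hψ
  have hψinj : Function.Injective ψ := by
    rw [← LinearMap.ker_eq_bot, Submodule.eq_bot_iff]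
    intro x hx
    have hxT : ψ₀ ((ker φ).subtype x) ∈ T := by
      have : ((ψ₀ ∘ₗ (ker φ).subtype).codRestrict (ker P) (fun c => hψ₀mem _)) x ∈ T' := by
        simpa [hψ, Submodule.Quotient.mk_eq_zero] using hx
      simpa [hT'] using this
    obtain ⟨z, hz⟩ := hxT
    set xK : ↥K := (ker φ).subtype x with hxK
    have hrange : S (xK : V) ∈ range D := by
      have h5 : D (S (σ (incl xK))) - S (xK : V) = D (S (z : V)) := by
        have h6 := hz.symm
        simp only [hφ, hψ₀, LinearMap.comp_apply, LinearMap.sub_apply] at h6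
        exact h6
      refine ⟨S (σ (incl xK)) - S (z : V), ?_⟩
      rw [map_sub, ← h5]
      abel
    have hker : S (xK : V) ∈ ker D := by
      have : φ xK = 0 := x.2
      simpa [hφ, LinearMap.mem_ker] using this
    have hS0 : S (xK : V) = 0 := by
      have : S (xK : V) ∈ ker D ⊓ range D := ⟨hker, hrange⟩
      rw [hD] at this
      simpa using this
    have : (xK : V) = 0 := by
      have := hPS (xK : V)
      rw [hS0, map_zero] at this
      exact this.symm
    ext
    exact this
  have h1 : finrank F ↥T + finrank F ↥(ker φ) = finrank F ↥K :=
    finrank_range_add_finrank_ker φ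
  have h2 : finrank F ↥(ker φ) ≤ finrank F (↥(ker P) ⧸ T') :=
    LinearMap.finrank_le_finrank_of_injective hψinj
  have h3 : finrank F (↥(ker P) ⧸ T') + finrank F ↥T' = finrank F ↥(ker P) :=
    Submodule.finrank_quotient_add_finrank T'
  have h4 : finrank F ↥T' = finrank F ↥T :=
    (Submodule.comapSubtypeEquivOfLe hTW).finrank_eq
  omega

/-- Every pair of matrices admits some simultaneous rank-one decomposition. -/
lemma pairDecomp_card {F : Type*} [Field F] {m n : Type*} [Fintype m] [Fintype n]
    (A B : Matrix m n F) :
    pairDecomp (Fintype.card (m × n)) A B := by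
  classical
  set e := Fintype.equivFin (m × n) with he
  refine ⟨fun k => Pi.single (e.symm k).1 1, fun k => Pi.single (e.symm k).2 1,
    fun k => A (e.symm k).1 (e.symm k).2, fun k => B (e.symm k).1 (e.symm k).2, ?_, ?_⟩ <;>
  · rw [← Equiv.sum_comp e]
    simp only [Equiv.symm_apply_apply]
    ext i j
    simp [Matrix.vecMulVec_apply, Pi.single_apply, Fintype.sum_prod_type,
      Finset.sum_ite_eq, mul_ite, ite_mul, Matrix.sum_apply]

/-- Main lower-bound engine: if `(1; Cm)` has a simultaneous decomposition of
length `r`, and `Cm` admits `lc` independent vectors lying in `ker Cm ∩ im Cm`,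
then `r ≥ card ι + lc`. -/
lemma mainBound {F : Type*} [Field F] [Infinite F] {ι : Type*} [Fintype ι] [DecidableEq ι]
    {r lc : ℕ} (Cm : Matrix ι ι F) (u w : Fin lc → ι → F)
    (hu : ∀ j, Cm *ᵥ u j = 0) (hw : ∀ j, Cm *ᵥ w j = u j)
    (hulin : LinearIndependent F u)
    (a b : Fin r → ι → F) (α γ : Fin r → F)
    (h1 : (1 : Matrix ι ι F) = ∑ i, α i • vecMulVec (a i) (b i))
    (hC : Cm = ∑ i, γ i • vecMulVec (a i) (b i)) :
    Fintype.card ι + lc ≤ r := by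
  classical
  set p : Polynomial F :=
    (1 + (Polynomial.X : Polynomial F) • Cm.map (Polynomial.C : F →+* Polynomial F)).det with hp
  have heval : ∀ μ : F, p.eval μ = (1 + μ • Cm).det := by
    intro μ
    have h := RingHom.map_det (Polynomial.evalRingHom μ)
      (1 + (Polynomial.X : Polynomial F) • Cm.map (Polynomial.C : F →+* Polynomial F))
    rw [hp]
    refine h.trans ?_
    congr 1
    ext i j
    simp only [RingHom.mapMatrix_apply, Matrix.map_apply, Matrix.add_apply, Matrix.smul_apply,
      Matrix.one_apply, smul_eq_mul, Polynomial.coe_evalRingHom, Polynomial.eval_add,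
      Polynomial.eval_mul, Polynomial.eval_X, Polynomial.eval_C,
      apply_ite (Polynomial.eval μ), Polynomial.eval_one, Polynomial.eval_zero]
  have hpne : p ≠ 0 := by
    intro h
    have h0 := heval 0
    rw [h] at h0
    simp at h0
  have hfin : ({μ : F | p.IsRoot μ} ∪ Set.range (fun i => -α i / γ i)).Finite :=
    (Polynomial.finite_setOf_isRoot hpne).union (Set.finite_range _)
  obtain ⟨μ, hμ⟩ := hfin.infinite_compl.nonempty
  rw [Set.mem_compl_iff, Set.mem_union, not_or] at hμ
  obtain ⟨hμ1, hμ2⟩ := hμ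
  set Mat : Matrix ι ι F := 1 + μ • Cm with hMat
  have hMdet : IsUnit Mat.det := by
    rw [isUnit_iff_ne_zero]
    intro h
    exact hμ1 (by rw [Set.mem_setOf_eq, Polynomial.IsRoot, heval μ]; exact h)
  have halpha : ∀ i, γ i ≠ 0 → α i + μ * γ i ≠ 0 := by
    intro i hγ h
    exact hμ2 ⟨i, by rw [div_eq_iff hγ]; linear_combination -h⟩
  set at' : Fin r → F := fun i => α i + μ * γ i with hat
  set d : Fin r → F := fun i => if at' i = 0 then 0 else γ i / at' i with hd
  have hγd : ∀ i, γ i = at' i * d i := by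
    intro i
    by_cases h : at' i = 0
    · have h0 : γ i = 0 := by
        by_contra hγ
        exact halpha i hγ (by simpa [hat] using h)
      simp [hd, h, h0]
    · simp only [hd, if_neg h]
      field_simp
  have hMatsum : Mat = ∑ i, at' i • vecMulVec (a i) (b i) := by
    rw [hMat, hC]
    nth_rewrite 1 [h1]
    rw [Finset.smul_sum, ← Finset.sum_add_distrib]
    refine Finset.sum_congr rfl fun i _ => ?_
    rw [smul_smul, ← add_smul]
  set Pm0 : Matrix ι (Fin r) F := Matrix.of (fun q i => at' i * a i q) with hPm0
  set Sm : Matrix (Fin r) ι F := Matrix.of (fun i q => b i q) with hSm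
  have hP0S : Pm0 * Sm = Mat := by
    rw [hMatsum]
    ext q q'
    rw [Matrix.mul_apply, Matrix.sum_apply]
    refine Finset.sum_congr rfl fun i _ => ?_
    show Pm0 q i * Sm i q' = (at' i • vecMulVec (a i) (b i)) q q'
    simp only [hPm0, hSm, Matrix.of_apply, Matrix.smul_apply, Matrix.vecMulVec_apply,
      smul_eq_mul]
    ring
  have hP0DS : Pm0 * Matrix.diagonal d * Sm = Cm := by
    rw [hC]
    ext q q'
    rw [Matrix.mul_apply, Matrix.sum_apply]
    refine Finset.sum_congr rfl fun i _ => ?_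
    show (Pm0 * Matrix.diagonal d) q i * Sm i q' = (γ i • vecMulVec (a i) (b i)) q q'
    rw [Matrix.mul_diagonal, hγd i]
    simp only [hPm0, hSm, Matrix.of_apply, Matrix.smul_apply, Matrix.vecMulVec_apply,
      smul_eq_mul]
    ring
  set Pm : Matrix ι (Fin r) F := Mat⁻¹ * Pm0 with hPm
  have hPS : Pm * Sm = 1 := by
    rw [hPm, Matrix.mul_assoc, hP0S, Matrix.nonsing_inv_mul _ hMdet]
  have hPDS : Pm * Matrix.diagonal d * Sm = Mat⁻¹ * Cm := by
    rw [hPm]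
    simp only [Matrix.mul_assoc]
    rw [← Matrix.mul_assoc Pm0, hP0DS]
  set P := Pm.mulVecLin with hPdef
  set S := Sm.mulVecLin with hSdef
  set D := (Matrix.diagonal d).mulVecLin with hDdef
  have hPSid : ∀ v, P (S v) = v := by
    intro v
    rw [hPdef, hSdef]
    simp only [Matrix.mulVecLin_apply]
    rw [Matrix.mulVec_mulVec, hPS, Matrix.one_mulVec]
  have hDkr : ker D ⊓ range D = ⊥ := by
    rw [Submodule.eq_bot_iff]
    intro v hv
    rw [Submodule.mem_inf] at hv
    obtain ⟨hk, w', hw'⟩ := hv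
    rw [LinearMap.mem_ker] at hk
    funext q
    have hvq : v q = d q * w' q := by
      rw [← hw']
      simp [hDdef, Matrix.mulVecLin_apply, Matrix.mulVec_diagonal]
    by_cases hdq : d q = 0
    · simp [hvq, hdq]
    · have : d q * v q = 0 := by
        have := congrFun hk q
        simpa [hDdef, Matrix.mulVecLin_apply, Matrix.mulVec_diagonal] using this
      rcases mul_eq_zero.mp this with h | h
      · exact absurd h hdq
      · exact h
  have hcomp : P ∘ₗ D ∘ₗ S = (Mat⁻¹ * Cm).mulVecLin := by
    rw [← hPDS, Matrix.mulVecLin_mul, Matrix.mulVecLin_mul]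
    rw [LinearMap.comp_assoc]
  have hcommute : Cm * Mat = Mat * Cm := by
    rw [hMat]
    simp only [Matrix.mul_add, Matrix.add_mul, Matrix.mul_one, Matrix.one_mul,
      Matrix.mul_smul, Matrix.smul_mul]
  set Cl := (Mat⁻¹ * Cm).mulVecLin with hCl
  have hmemK : ∀ j, u j ∈ ker Cl ⊓ range Cl := by
    intro j
    rw [Submodule.mem_inf]
    constructor
    · rw [LinearMap.mem_ker, hCl]
      simp only [Matrix.mulVecLin_apply]
      rw [← Matrix.mulVec_mulVec, hu j, Matrix.mulVec_zero]
    · refine ⟨Mat *ᵥ w j, ?_⟩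
      rw [hCl]
      simp only [Matrix.mulVecLin_apply]
      rw [Matrix.mulVec_mulVec]
      have : Mat⁻¹ * Cm * Mat = Cm := by
        rw [Matrix.mul_assoc, hcommute, ← Matrix.mul_assoc, Matrix.nonsing_inv_mul _ hMdet,
          Matrix.one_mul]
      rw [this, hw j]
  have hfl : lc ≤ finrank F ↥(ker Cl ⊓ range Cl) := by
    have hli : LinearIndependent F (fun j => (⟨u j, hmemK j⟩ : ↥(ker Cl ⊓ range Cl))) := by
      apply LinearIndependent.of_comp (ker Cl ⊓ range Cl).subtype
      exact hulin
    simpa using hli.fintype_card_le_finrank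
  have hKle : finrank F ↥(ker Cl ⊓ range Cl) ≤ finrank F ↥(ker P) := by
    have h := lemA P S D hPSid hDkr
    rwa [hcomp] at h
  have hsurj : range P = ⊤ := LinearMap.range_eq_top.mpr (fun v => ⟨S v, hPSid v⟩)
  have hrn : finrank F ↥(range P) + finrank F ↥(ker P) = finrank F (Fin r → F) :=
    finrank_range_add_finrank_ker P
  rw [hsurj, finrank_top, Module.finrank_fintype_fun_eq_card,
    Module.finrank_fintype_fun_eq_card, Fintype.card_fin] at hrn
  omega

/-- Lower bound for the rank of `Diag(A_1, …, A_ℓ, (E_{n'}; X))` where each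
`A_j = (E_{n_j}; x E_{n_j} + J_{n_j})` with `n_j ≥ 2`. -/
theorem pairRank_jordan_blockDiag_lower {F : Type*} [RCLike F] {ℓ n' : ℕ}
    (nj : Fin ℓ → ℕ) (hnj : ∀ j, 2 ≤ nj j) (x : F)
    (X : Matrix (Fin n') (Fin n') F) :
    (∑ j, nj j) + n' + ℓ ≤
      pairRank
        (1 : Matrix ((Σ j : Fin ℓ, Fin (nj j)) ⊕ Fin n')
              ((Σ j : Fin ℓ, Fin (nj j)) ⊕ Fin n') F)
        (Matrix.of fun p q =>
          match p, q with
          | Sum.inl ⟨j, a⟩, Sum.inl ⟨j', b⟩ =>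
              if j = j' then
                if (a : ℕ) = (b : ℕ) then x
                else if (a : ℕ) + 1 = (b : ℕ) then 1 else 0
              else 0
          | Sum.inr i, Sum.inr i' => X i i'
          | _, _ => 0) := by
  classical
  set Bm : Matrix ((Σ j : Fin ℓ, Fin (nj j)) ⊕ Fin n')
      ((Σ j : Fin ℓ, Fin (nj j)) ⊕ Fin n') F :=
    (Matrix.of fun p q =>
          match p, q with
          | Sum.inl ⟨j, a⟩, Sum.inl ⟨j', b⟩ =>
              if j = j' then
                if (a : ℕ) = (b : ℕ) then x
                else if (a : ℕ) + 1 = (b : ℕ) then 1 else 0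
              else 0
          | Sum.inr i, Sum.inr i' => X i i'
          | _, _ => 0) with hBm
  show (∑ j, nj j) + n' + ℓ ≤ sInf {r | pairDecomp r 1 Bm}
  apply le_csInf
  · exact ⟨_, pairDecomp_card 1 Bm⟩
  rintro r ⟨a, b, α, β, h1, h2⟩
  set Cm := Bm - x • (1 : Matrix _ _ F) with hCm
  have hCsum : Cm = ∑ i, (β i - x * α i) • vecMulVec (a i) (b i) := by
    rw [hCm, h2, h1, Finset.smul_sum, ← Finset.sum_sub_distrib]
    refine Finset.sum_congr rfl fun i _ => ?_
    rw [smul_smul, ← sub_smul]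
  have h0lt : ∀ j, 0 < nj j := fun j => lt_of_lt_of_le (by norm_num) (hnj j)
  have h1lt : ∀ j, 1 < nj j := fun j => lt_of_lt_of_le (by norm_num) (hnj j)
  have hSig : ∀ (j1 j2 : Fin ℓ) (c1 : Fin (nj j1)) (c2 : Fin (nj j2)),
      (Sum.inl ⟨j1, c1⟩ : (Σ j : Fin ℓ, Fin (nj j)) ⊕ Fin n') = Sum.inl ⟨j2, c2⟩ ↔
        (j1 = j2 ∧ (c1 : ℕ) = (c2 : ℕ)) := by
    intro j1 j2 c1 c2
    constructor
    · intro h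
      have h2' : (⟨j1, c1⟩ : Σ j : Fin ℓ, Fin (nj j)) = ⟨j2, c2⟩ := Sum.inl.inj h
      have hj : j1 = j2 := congrArg Sigma.fst h2'
      refine ⟨hj, ?_⟩
      have := congrArg (fun s : (Σ j : Fin ℓ, Fin (nj j)) => (s.2 : ℕ)) h2'
      simpa using this
    · rintro ⟨hj, hc⟩
      subst hj
      have : c1 = c2 := Fin.ext hc
      subst this
      rfl
  have hBent : ∀ (j : Fin ℓ) p, Cm p (Sum.inl ⟨j, ⟨0, h0lt j⟩⟩) = 0 := by
    intro j p
    rcases p with ⟨j', c⟩ | i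
    · simp only [hCm, Matrix.sub_apply, Matrix.smul_apply, hBm, Matrix.of_apply,
        Matrix.one_apply, smul_eq_mul]
      by_cases hj : j' = j
      · subst hj
        by_cases hc : (c : ℕ) = 0
        · rw [if_pos rfl, if_pos (show (c:ℕ) = ((⟨0, h0lt j'⟩ : Fin (nj j')):ℕ) from hc),
            if_pos ((hSig j' j' c ⟨0, h0lt j'⟩).mpr ⟨rfl, hc⟩)]
          ring
        · rw [if_pos rfl,
            if_neg (show ¬(c:ℕ) = ((⟨0, h0lt j'⟩ : Fin (nj j')):ℕ) from hc),
            if_neg (show ¬(c:ℕ) + 1 = ((⟨0, h0lt j'⟩ : Fin (nj j')):ℕ) by simp),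
            if_neg (fun h => hc ((hSig j' j' c ⟨0, h0lt j'⟩).mp h).2)]
          ring
      · rw [if_neg hj, if_neg (fun h => hj ((hSig j' j c ⟨0, h0lt j⟩).mp h).1)]
        ring
    · simp [hCm, hBm, Matrix.sub_apply, Matrix.smul_apply, Matrix.one_apply]
  have hBent1 : ∀ (j : Fin ℓ) p, Cm p (Sum.inl ⟨j, ⟨1, h1lt j⟩⟩)
      = (Pi.single (Sum.inl ⟨j, ⟨0, h0lt j⟩⟩) 1 : ((Σ j : Fin ℓ, Fin (nj j)) ⊕ Fin n') → F) p := by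
    intro j p
    rcases p with ⟨j', c⟩ | i
    · simp only [hCm, Matrix.sub_apply, Matrix.smul_apply, hBm, Matrix.of_apply,
        Matrix.one_apply, smul_eq_mul, Pi.single_apply]
      by_cases hj : j' = j
      · subst hj
        by_cases hc1 : (c : ℕ) = 1
        · rw [if_pos rfl, if_pos (show (c:ℕ) = ((⟨1, h1lt j'⟩ : Fin (nj j')):ℕ) from hc1),
            if_pos ((hSig j' j' c ⟨1, h1lt j'⟩).mpr ⟨rfl, hc1⟩),
            if_neg (fun h => by have := ((hSig j' j' c ⟨0, h0lt j'⟩).mp h).2; simp at this; omega)]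
          ring
        · by_cases hc0 : (c : ℕ) = 0
          · rw [if_pos rfl,
              if_neg (show ¬(c:ℕ) = ((⟨1, h1lt j'⟩ : Fin (nj j')):ℕ) from by
                simpa using hc1),
              if_pos (show (c:ℕ) + 1 = ((⟨1, h1lt j'⟩ : Fin (nj j')):ℕ) from by
                simp [hc0]),
              if_neg (fun h => by have := ((hSig j' j' c ⟨1, h1lt j'⟩).mp h).2; simp at this; omega),
              if_pos ((hSig j' j' c ⟨0, h0lt j'⟩).mpr ⟨rfl, hc0⟩)]
            ring
          · rw [if_pos rfl,
              if_neg (show ¬(c:ℕ) = ((⟨1, h1lt j'⟩ : Fin (nj j')):ℕ) from by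
                simpa using hc1),
              if_neg (show ¬(c:ℕ) + 1 = ((⟨1, h1lt j'⟩ : Fin (nj j')):ℕ) from by
                simpa using hc0),
              if_neg (fun h => by have := ((hSig j' j' c ⟨1, h1lt j'⟩).mp h).2; simp at this; omega),
              if_neg (fun h => by have := ((hSig j' j' c ⟨0, h0lt j'⟩).mp h).2; simp at this; omega)]
            ring
      · rw [if_neg hj, if_neg (fun h => hj ((hSig j' j c ⟨1, h1lt j⟩).mp h).1),
          if_neg (fun h => hj ((hSig j' j c ⟨0, h0lt j⟩).mp h).1)]
        ring
    · simp [hCm, hBm, Matrix.sub_apply, Matrix.smul_apply, Matrix.one_apply, Pi.single_apply]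
  have hu : ∀ j : Fin ℓ, Cm *ᵥ
      (Pi.single (Sum.inl ⟨j, ⟨0, h0lt j⟩⟩) 1 : ((Σ j : Fin ℓ, Fin (nj j)) ⊕ Fin n') → F) = 0 := by
    intro j
    rw [Matrix.mulVec_single]
    funext p
    simp [hBent j p]
  have hw : ∀ j : Fin ℓ, Cm *ᵥ
      (Pi.single (Sum.inl ⟨j, ⟨1, h1lt j⟩⟩) 1 : ((Σ j : Fin ℓ, Fin (nj j)) ⊕ Fin n') → F)
      = (Pi.single (Sum.inl ⟨j, ⟨0, h0lt j⟩⟩) 1 : ((Σ j : Fin ℓ, Fin (nj j)) ⊕ Fin n') → F) := by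
    intro j
    rw [Matrix.mulVec_single]
    funext p
    simp only [Pi.smul_apply, op_smul_eq_mul, mul_one]
    exact hBent1 j p
  have hginj : Function.Injective
      (fun j : Fin ℓ => (Sum.inl ⟨j, ⟨0, h0lt j⟩⟩ : (Σ j : Fin ℓ, Fin (nj j)) ⊕ Fin n')) := by
    intro j1 j2 h
    exact ((hSig j1 j2 _ _).mp h).1
  have hulin : LinearIndependent F (fun j : Fin ℓ =>
      (Pi.single (Sum.inl ⟨j, ⟨0, h0lt j⟩⟩) 1 : ((Σ j : Fin ℓ, Fin (nj j)) ⊕ Fin n') → F)) := by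
    have h := (Pi.basisFun F ((Σ j : Fin ℓ, Fin (nj j)) ⊕ Fin n')).linearIndependent.comp _ hginj
    have heq : (⇑(Pi.basisFun F ((Σ j : Fin ℓ, Fin (nj j)) ⊕ Fin n')) ∘
        (fun j : Fin ℓ => (Sum.inl ⟨j, ⟨0, h0lt j⟩⟩ : (Σ j : Fin ℓ, Fin (nj j)) ⊕ Fin n')))
        = fun j : Fin ℓ =>
          (Pi.single (Sum.inl ⟨j, ⟨0, h0lt j⟩⟩) 1 : ((Σ j : Fin ℓ, Fin (nj j)) ⊕ Fin n') → F) := by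
      funext j
      simp [Pi.basisFun_apply]
    rwa [heq] at h
  have hmain := mainBound Cm _ _ hu hw hulin a b α (fun i => β i - x * α i) h1 hCsum
  have hcard : Fintype.card ((Σ j : Fin ℓ, Fin (nj j)) ⊕ Fin n') = (∑ j, nj j) + n' := by
    simp [Fintype.card_sum, Fintype.card_sigma, Fintype.card_fin]
  omega
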